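/- A blocking set B of PG(n,q) of size smaller than 2q is uniquely reducible to a minimal blocking set: there is a unique minimal blocking set contained in B, namely the set of essential points of B. -/

import Mathlib

open scoped Classical

noncomputable section

/-- The point set of `PG(n,q)`, `q = p^h`: the projectivization of `F_q^{n+1}`. -/
abbrev PGPoint (p h n : ℕ) [Fact p.Prime] :=
  Projectivization (GaloisField p h) (Fin (n+1) → GaloisField p h)

noncomputable instance (p h n : ℕ) [Fact p.Prime] : Fintype (PGPoint p h n) :=
  @Fintype.ofFinite _ (Quotient.finite _)

/-- A finite set of points of `PG(n,q)` is a blocking set if it meets every hyperplane. -/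
def IsBlockingSet (p h n : ℕ) [Fact p.Prime] (B : Finset (PGPoint p h n)) : Prop :=
  ∀ W : Submodule (GaloisField p h) (Fin (n+1) → GaloisField p h),
    Module.finrank (GaloisField p h) W = n → ∃ P ∈ B, P.submodule ≤ W

/-- A minimal blocking set: no proper subset is a blocking set. -/
def IsMinimalBlockingSet (p h n : ℕ) [Fact p.Prime] (B : Finset (PGPoint p h n)) : Prop :=
  IsBlockingSet p h n B ∧ ∀ B' ⊂ B, ¬ IsBlockingSet p h n B'

/-- A point `P` of `B` is essential if some hyperplane meets `B` exactly in `P`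
(a tangent hyperplane at `P`). -/
def IsEssential (p h n : ℕ) [Fact p.Prime] (B : Finset (PGPoint p h n))
    (P : PGPoint p h n) : Prop :=
  P ∈ B ∧ ∃ W : Submodule (GaloisField p h) (Fin (n+1) → GaloisField p h),
    Module.finrank (GaloisField p h) W = n ∧ P.submodule ≤ W ∧
    ∀ Q ∈ B, Q.submodule ≤ W → Q = P

section AuxPoly

open MvPolynomial

/-- If the total degree of a multivariate polynomial over a finite field is less than
`r * (q - 1)`, then the sum of its values over all of `K^r` vanishes. -/
private lemma sum_eval_eq_zero {K : Type*} [Field K] [Fintype K] {r : ℕ}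
    (g : MvPolynomial (Fin r) K)
    (hdeg : g.totalDegree < r * (Fintype.card K - 1)) :
    ∑ y : Fin r → K, MvPolynomial.eval y g = 0 := by
  calc ∑ y : Fin r → K, eval y g
      = ∑ y : Fin r → K, ∑ d ∈ g.support, g.coeff d * ∏ i, y i ^ d i :=
        Finset.sum_congr rfl fun y _ => eval_eq' y g
    _ = ∑ d ∈ g.support, ∑ y : Fin r → K, g.coeff d * ∏ i, y i ^ d i := Finset.sum_comm
    _ = ∑ d ∈ g.support, g.coeff d * ∑ y : Fin r → K, ∏ i, y i ^ d i :=
        Finset.sum_congr rfl fun d _ => (Finset.mul_sum _ _ _).symm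
    _ = ∑ d ∈ g.support, g.coeff d * ∏ i, ∑ c : K, c ^ d i := by
        refine Finset.sum_congr rfl fun d _ => ?_
        rw [← Fintype.prod_sum (fun i (c : K) => c ^ d i)]
    _ = 0 := by
        refine Finset.sum_eq_zero fun d hd => ?_
        obtain ⟨i, hi⟩ : ∃ i, d i < Fintype.card K - 1 := by
          by_contra hc
          push_neg at hc
          have h1 : r * (Fintype.card K - 1) ≤ ∑ i, d i :=
            calc r * (Fintype.card K - 1)
                = ∑ _i : Fin r, (Fintype.card K - 1) := by
                  simp [Finset.sum_const, mul_comm]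
              _ ≤ ∑ i, d i := Finset.sum_le_sum fun i _ => hc i
          have h2 : (∑ i, d i) ≤ g.totalDegree := by
            have h3 := MvPolynomial.le_totalDegree hd
            rwa [Finsupp.sum_fintype _ _ (fun _ => rfl)] at h3
          omega
        rw [Finset.prod_eq_zero (Finset.mem_univ i)
          (FiniteField.sum_pow_lt_card_sub_one K (d i) hi), mul_zero]

private lemma totalDegree_factor_le {K : Type*} [Field K] (a b : K) :
    (1 - MvPolynomial.C a * MvPolynomial.X 0 - MvPolynomial.C b * MvPolynomial.X 1 :
      MvPolynomial (Fin 2) K).totalDegree ≤ 1 := by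
  have hrw : (1 - MvPolynomial.C a * MvPolynomial.X 0 - MvPolynomial.C b * MvPolynomial.X 1 :
      MvPolynomial (Fin 2) K)
      = (C 1 + (C (-a) * X 0 + C (-b) * X 1)) := by
    simp only [map_neg, map_one]
    ring
  rw [hrw]
  refine le_trans (totalDegree_add _ _) (max_le ?_ ?_)
  · simp [totalDegree_C]
  · refine le_trans (totalDegree_add _ _) (max_le ?_ ?_) <;>
    · refine le_trans (totalDegree_mul _ _) ?_
      simp [totalDegree_C, totalDegree_X]

end AuxPoly

section AuxGeom

variable (p h n : ℕ) [Fact p.Prime]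

private lemma submodule_le_iff (P : PGPoint p h n)
    (W : Submodule (GaloisField p h) (Fin (n+1) → GaloisField p h)) :
    P.submodule ≤ W ↔ P.rep ∈ W := by
  rw [Projectivization.submodule_eq, Submodule.span_singleton_le_iff_mem]

/-- The key lemma: if `|B| < 2q`, then every hyperplane contains an essential point of `B`.
In other words, the set of essential points of `B` is itself a blocking set. -/
private lemma essential_blocking (hh : 0 < h)
    (B : Finset (PGPoint p h n)) (hB : IsBlockingSet p h n B)
    (hcard : B.card < 2 * p ^ h) :
    IsBlockingSet p h n (B.filter fun P => IsEssential p h n B P) := by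
  classical
  set K := GaloisField p h with hK
  set V := (Fin (n+1) → K) with hV
  by_contra hcon
  unfold IsBlockingSet at hcon
  push_neg at hcon
  obtain ⟨W₀', hW₀'rank, hW₀'⟩ := hcon
  have hW₀'ness : ∀ P ∈ B, P.submodule ≤ W₀' → ¬ IsEssential p h n B P := fun P hPB hle hEss =>
    hW₀' P (Finset.mem_filter.mpr ⟨hPB, hEss⟩) hle
  -- the collection of cardinalities of traces of "all-inessential" hyperplanes on B
  set A : Set ℕ := {m | ∃ W : Submodule K V, Module.finrank K W = n ∧
      (∀ P ∈ B, P.submodule ≤ W → ¬ IsEssential p h n B P) ∧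
      (B.filter (fun P => P.submodule ≤ W)).card = m} with hA
  have hAne : A.Nonempty := ⟨_, W₀', hW₀'rank, hW₀'ness, rfl⟩
  obtain ⟨W₀, hW₀rank, hW₀ness, hW₀card⟩ := Nat.sInf_mem hAne
  set D := B.filter (fun P => P.submodule ≤ W₀) with hD
  set N := B.filter (fun P => ¬ P.submodule ≤ W₀) with hN
  have hDN : D.card + N.card = B.card := Finset.card_filter_add_card_filter_not _
  -- D is nonempty since B is blocking
  obtain ⟨P₀, hP₀B, hP₀le⟩ := hB W₀ hW₀rank
  have hP₀D : P₀ ∈ D := Finset.mem_filter.mpr ⟨hP₀B, hP₀le⟩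
  -- D has at least two points, else the single point would be essential
  have hD2 : 1 < D.card := by
    by_contra hc
    push_neg at hc
    have hone : ∀ Q ∈ B, Q.submodule ≤ W₀ → Q = P₀ := by
      intro Q hQB hQle
      exact Finset.card_le_one.mp hc Q (Finset.mem_filter.mpr ⟨hQB, hQle⟩) P₀ hP₀D
    exact hW₀ness P₀ hP₀B hP₀le ⟨hP₀B, W₀, hW₀rank, hP₀le, hone⟩
  obtain ⟨P₁, hP₁D, P₂, hP₂D, hP₁₂⟩ := Finset.one_lt_card.mp hD2
  -- a linear functional with kernel W₀
  have hfinV : Module.finrank K V = n + 1 := Module.finrank_fin_fun K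
  obtain ⟨ψ, hψker⟩ : ∃ ψ : V →ₗ[K] K, LinearMap.ker ψ = W₀ := by
    have hq : Module.finrank K (V ⧸ W₀) = Module.finrank K K := by
      have := Submodule.finrank_quotient_add_finrank W₀
      rw [hfinV, hW₀rank] at this
      rw [Module.finrank_self]
      omega
    let e : (V ⧸ W₀) ≃ₗ[K] K := LinearEquiv.ofFinrankEq _ _ hq
    refine ⟨e.toLinearMap ∘ₗ W₀.mkQ, ?_⟩
    rw [LinearMap.ker_comp, LinearEquiv.ker, Submodule.comap_bot, Submodule.ker_mkQ]
  have hmemW₀ : ∀ P : PGPoint p h n, P.submodule ≤ W₀ → ψ P.rep = 0 := by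
    intro P hle
    have : P.rep ∈ W₀ := (submodule_le_iff p h n P W₀).mp hle
    rw [← hψker] at this
    exact this
  -- linearly independent representatives of the two points of D
  have hrep_ne : ∀ a : K, a • P₁.rep ≠ P₂.rep := by
    intro a hc
    apply hP₁₂
    rw [← Projectivization.mk_rep P₁, ← Projectivization.mk_rep P₂]
    exact ((Projectivization.mk_eq_mk_iff' K P₂.rep P₁.rep (Projectivization.rep_nonzero P₂)
      (Projectivization.rep_nonzero P₁)).mpr ⟨a, hc⟩).symm
  have hsetind : LinearIndepOn K id ({P₁.rep, P₂.rep} : Set V) :=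
    linearIndepOn_id_pair (Projectivization.rep_nonzero P₁) hrep_ne
  -- dual functionals
  set bS := Module.Basis.extend hsetind with hbS
  have hmem₁ : P₁.rep ∈ hsetind.extend (Set.subset_univ _) :=
    hsetind.subset_extend _ (by left; rfl)
  have hmem₂ : P₂.rep ∈ hsetind.extend (Set.subset_univ _) :=
    hsetind.subset_extend _ (by right; rfl)
  set χ₁ : V →ₗ[K] K := bS.coord ⟨P₁.rep, hmem₁⟩ with hχ₁
  set χ₂ : V →ₗ[K] K := bS.coord ⟨P₂.rep, hmem₂⟩ with hχ₂
  have hrepne : P₁.rep ≠ P₂.rep := by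
    intro hc
    exact hrep_ne 1 (by rw [one_smul, hc])
  have hb₁ : bS ⟨P₁.rep, hmem₁⟩ = P₁.rep := Module.Basis.extend_apply_self _ _
  have hb₂ : bS ⟨P₂.rep, hmem₂⟩ = P₂.rep := Module.Basis.extend_apply_self _ _
  have hkey₁ : ∀ j : hsetind.extend (Set.subset_univ _),
      χ₁ (bS j) = if j = ⟨P₁.rep, hmem₁⟩ then 1 else 0 := by
    intro j
    rw [hχ₁, Module.Basis.coord_apply, Module.Basis.repr_self, Finsupp.single_apply]
  have hkey₂ : ∀ j : hsetind.extend (Set.subset_univ _),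
      χ₂ (bS j) = if j = ⟨P₂.rep, hmem₂⟩ then 1 else 0 := by
    intro j
    rw [hχ₂, Module.Basis.coord_apply, Module.Basis.repr_self, Finsupp.single_apply]
  have hsub_ne : (⟨P₁.rep, hmem₁⟩ : hsetind.extend (Set.subset_univ _)) ≠ ⟨P₂.rep, hmem₂⟩ := by
    simp only [ne_eq, Subtype.mk.injEq]
    exact hrepne
  have hχ₁v₁ : χ₁ P₁.rep = 1 := by
    have := hkey₁ ⟨P₁.rep, hmem₁⟩
    rw [hb₁] at this
    simpa using this
  have hχ₁v₂ : χ₁ P₂.rep = 0 := by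
    have := hkey₁ ⟨P₂.rep, hmem₂⟩
    rw [hb₂] at this
    simpa [hsub_ne.symm] using this
  have hχ₂v₁ : χ₂ P₁.rep = 0 := by
    have := hkey₂ ⟨P₁.rep, hmem₁⟩
    rw [hb₁] at this
    simpa [hsub_ne] using this
  have hχ₂v₂ : χ₂ P₂.rep = 1 := by
    have := hkey₂ ⟨P₂.rep, hmem₂⟩
    rw [hb₂] at this
    simpa using this
  -- ψ does not vanish on representatives of points of N
  have hNpsi : ∀ Q ∈ N, ψ Q.rep ≠ 0 := by
    intro Q hQ h0
    have hQn : ¬ Q.submodule ≤ W₀ := (Finset.mem_filter.mp hQ).2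
    apply hQn
    rw [submodule_le_iff p h n Q W₀, ← hψker]
    exact h0
  -- the normalized dual coordinates of points of N
  set a : PGPoint p h n → K := fun Q => χ₁ Q.rep * (ψ Q.rep)⁻¹ with ha
  set b : PGPoint p h n → K := fun Q => χ₂ Q.rep * (ψ Q.rep)⁻¹ with hbdef
  -- the key polynomial
  set g : MvPolynomial (Fin 2) K :=
    ∏ Q ∈ N, (1 - MvPolynomial.C (a Q) * MvPolynomial.X 0
      - MvPolynomial.C (b Q) * MvPolynomial.X 1) with hg
  -- key step: for y ≠ 0 some factor of g vanishes at y
  have hkey : ∀ y : Fin 2 → K, y ≠ 0 → ∃ Q ∈ N, a Q * y 0 + b Q * y 1 = 1 := by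
    intro y hy
    set φ : V →ₗ[K] K := ψ - (y 0 • χ₁ + y 1 • χ₂) with hφ
    have hφ₁ : φ P₁.rep = - y 0 := by
      have h₀ : ψ P₁.rep = 0 := hmemW₀ P₁ (Finset.mem_filter.mp hP₁D).2
      simp [hφ, h₀, hχ₁v₁, hχ₂v₁]
    have hφ₂ : φ P₂.rep = - y 1 := by
      have h₀ : ψ P₂.rep = 0 := hmemW₀ P₂ (Finset.mem_filter.mp hP₂D).2
      simp [hφ, h₀, hχ₁v₂, hχ₂v₂]
    -- a point of D whose representative is not killed by φ
    obtain ⟨Pj, hPjD, hφPj⟩ : ∃ Pj ∈ D, φ Pj.rep ≠ 0 := by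
      have hy' : y 0 ≠ 0 ∨ y 1 ≠ 0 := by
        by_contra hcc
        push_neg at hcc
        apply hy
        funext j
        fin_cases j
        · exact hcc.1
        · exact hcc.2
      rcases hy' with h0 | h1
      · exact ⟨P₁, hP₁D, by rw [hφ₁]; simpa using h0⟩
      · exact ⟨P₂, hP₂D, by rw [hφ₂]; simpa using h1⟩
    -- the kernel of φ is a hyperplane
    have hrank : Module.finrank K (LinearMap.ker φ) = n := by
      have hsurj : Function.Surjective φ := by
        intro c
        refine ⟨(c * (φ Pj.rep)⁻¹) • Pj.rep, ?_⟩
        rw [map_smul, smul_eq_mul, mul_assoc, inv_mul_cancel₀ hφPj, mul_one]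
      have h1 := LinearMap.finrank_range_add_finrank_ker φ
      rw [LinearMap.range_eq_top.mpr hsurj, finrank_top, Module.finrank_self, hfinV] at h1
      omega
    -- some point of N lies in ker φ
    have hNW : ∃ Q ∈ N, Q.rep ∈ LinearMap.ker φ := by
      by_contra hc
      push_neg at hc
      have hsub : B.filter (fun P => P.submodule ≤ LinearMap.ker φ) ⊆ D := by
        intro P hP
        rcases Finset.mem_filter.mp hP with ⟨hPB, hPle⟩
        rw [hD, Finset.mem_filter]
        refine ⟨hPB, ?_⟩
        by_contra hPW₀
        exact hc P (Finset.mem_filter.mpr ⟨hPB, hPW₀⟩)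
          ((submodule_le_iff p h n P (LinearMap.ker φ)).mp hPle)
      have hmemA : (B.filter (fun P => P.submodule ≤ LinearMap.ker φ)).card ∈ A := by
        refine ⟨LinearMap.ker φ, hrank, ?_, rfl⟩
        intro P hPB hPle
        have hPD : P ∈ D := hsub (Finset.mem_filter.mpr ⟨hPB, hPle⟩)
        exact hW₀ness P hPB (Finset.mem_filter.mp hPD).2
      have hge : D.card ≤ (B.filter (fun P => P.submodule ≤ LinearMap.ker φ)).card := by
        rw [hD, hW₀card]
        exact Nat.sInf_le hmemA
      have heq : B.filter (fun P => P.submodule ≤ LinearMap.ker φ) = D :=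
        Finset.eq_of_subset_of_card_le hsub hge
      have hPjmem : Pj ∈ B.filter (fun P => P.submodule ≤ LinearMap.ker φ) := by
        rw [heq]; exact hPjD
      have : Pj.rep ∈ LinearMap.ker φ :=
        (submodule_le_iff p h n Pj (LinearMap.ker φ)).mp (Finset.mem_filter.mp hPjmem).2
      exact hφPj this
    obtain ⟨Q, hQN, hQker⟩ := hNW
    refine ⟨Q, hQN, ?_⟩
    have hQ0 : φ Q.rep = 0 := LinearMap.mem_ker.mp hQker
    have hψQ : ψ Q.rep = y 0 * χ₁ Q.rep + y 1 * χ₂ Q.rep := by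
      have h' : ψ Q.rep - (y 0 * χ₁ Q.rep + y 1 * χ₂ Q.rep) = 0 := by
        rw [hφ] at hQ0
        simpa [smul_eq_mul] using hQ0
      exact sub_eq_zero.mp h'
    have hcQ := hNpsi Q hQN
    have hexp : a Q * y 0 + b Q * y 1 = (y 0 * χ₁ Q.rep + y 1 * χ₂ Q.rep) * (ψ Q.rep)⁻¹ := by
      rw [ha, hbdef]; ring
    rw [hexp, ← hψQ, mul_inv_cancel₀ hcQ]
  -- evaluation of g
  have heval : ∀ y : Fin 2 → K, MvPolynomial.eval y g =
      ∏ Q ∈ N, (1 - a Q * y 0 - b Q * y 1) := by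
    intro y
    rw [hg, map_prod]
    refine Finset.prod_congr rfl fun Q _ => ?_
    simp
  have heval0 : MvPolynomial.eval (0 : Fin 2 → K) g = 1 := by
    rw [heval]
    simp
  have hevaly : ∀ y : Fin 2 → K, y ≠ 0 → MvPolynomial.eval y g = 0 := by
    intro y hy
    obtain ⟨Q, hQN, hQ1⟩ := hkey y hy
    rw [heval]
    refine Finset.prod_eq_zero hQN ?_
    rw [← hQ1]; ring
  letI : Fintype K := Fintype.ofFinite K
  have hsum : ∑ y : Fin 2 → K, MvPolynomial.eval y g = 1 := by
    rw [Finset.sum_eq_single_of_mem (0 : Fin 2 → K) (Finset.mem_univ _)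
      (fun y _ hy => hevaly y hy), heval0]
  -- degree bounds
  have hdeg_le : g.totalDegree ≤ N.card := by
    rw [hg]
    refine le_trans (MvPolynomial.totalDegree_finset_prod _ _) ?_
    calc ∑ Q ∈ N, (1 - MvPolynomial.C (a Q) * MvPolynomial.X 0
          - MvPolynomial.C (b Q) * MvPolynomial.X 1 : MvPolynomial (Fin 2) K).totalDegree
        ≤ ∑ _Q ∈ N, 1 := Finset.sum_le_sum fun Q _ => totalDegree_factor_le (a Q) (b Q)
      _ = N.card := by simp
  have hdeg_ge : 2 * (Fintype.card K - 1) ≤ g.totalDegree := by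
    by_contra hc
    push_neg at hc
    have h0 := sum_eval_eq_zero g hc
    rw [hsum] at h0
    exact one_ne_zero h0
  have hcardK : Fintype.card K = p ^ h := by
    rw [← Nat.card_eq_fintype_card]
    exact GaloisField.card p h hh.ne'
  have hq2 : 2 ≤ p ^ h := by
    have h1 : 1 < Fintype.card K := Fintype.one_lt_card
    omega
  rw [hcardK] at hdeg_ge
  omega

end AuxGeom

/-- a blocking set `B` of `PG(n,q)` of size `< 2q` is uniquely reducible to
a minimal blocking set: the set of essential points of `B` is a minimal blocking set
contained in `B`, and it is the unique minimal blocking set contained in `B`. -/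
theorem stmt2 (p h n : ℕ) [Fact p.Prime] (hh : 0 < h) (hn : 1 ≤ n)
    (B : Finset (PGPoint p h n)) (hB : IsBlockingSet p h n B)
    (hcard : B.card < 2 * p ^ h) :
    IsMinimalBlockingSet p h n (B.filter fun P => IsEssential p h n B P) ∧
    ∀ M : Finset (PGPoint p h n), M ⊆ B → IsMinimalBlockingSet p h n M →
      M = B.filter fun P => IsEssential p h n B P := by
  classical
  set E := B.filter fun P => IsEssential p h n B P with hE
  have hEB : E ⊆ B := Finset.filter_subset _ _
  have hEblock : IsBlockingSet p h n E := essential_blocking p h n hh B hB hcard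
  -- any blocking subset of B contains E
  have hEle : ∀ M : Finset (PGPoint p h n), M ⊆ B → IsBlockingSet p h n M → E ⊆ M := by
    intro M hMB hMblock P hPE
    rcases Finset.mem_filter.mp hPE with ⟨hPB, _, W, hWrank, _, htan⟩
    obtain ⟨Q, hQM, hQle⟩ := hMblock W hWrank
    have : Q = P := htan Q (hMB hQM) hQle
    rwa [← this]
  have hEmin : IsMinimalBlockingSet p h n E := by
    refine ⟨hEblock, ?_⟩
    intro B' hB' hB'block
    obtain ⟨P, hPE, hPB'⟩ := Finset.exists_of_ssubset hB'
    rcases Finset.mem_filter.mp hPE with ⟨hPB, _, W, hWrank, _, htan⟩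
    obtain ⟨Q, hQB', hQle⟩ := hB'block W hWrank
    have hQB : Q ∈ B := hEB ((Finset.ssubset_def.mp hB').1 hQB')
    have : Q = P := htan Q hQB hQle
    rw [this] at hQB'
    exact hPB' hQB'
  refine ⟨hEmin, ?_⟩
  intro M hMB hMmin
  have hEM : E ⊆ M := hEle M hMB hMmin.1
  by_contra hne
  have hssub : E ⊂ M := Finset.ssubset_iff_subset_ne.mpr ⟨hEM, fun hEq => hne hEq.symm⟩
  exact hMmin.2 E hssub hEblock

end
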